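/- Under the relations d·a₀ = e·c₀, c_k = 0, and d·a_i = b·c_{i-1} + e·c_i for i = 1,…,k (with b, d ≠ 0, k ≥ 2), every solution (α₁, α₂) ∈ ℝ² of the system Σ_{i=0}^{k} a_i α₁^i α₂^{k-i} + b α₁ + e α₂ = 0 and Σ_{i=0}^{k} c_i α₁^i α₂^{k-i} + d α₂ = 0 satisfies either Σ_{i=0}^{k-1} c_i α₁^i α₂^{k-1-i} + d = 0, or (b α₁ + e α₂ = 0 and α₂ = 0). -/

import Mathlib

/-- Every solution of the reduced system lies on the curve
`Σ cᵢ α₁^i α₂^(k-1-i) + d = 0` or satisfies `b α₁ + e α₂ = 0 ∧ α₂ = 0`. -/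
theorem stmt_3 (k : ℕ) (hk : 2 ≤ k) (a c : ℕ → ℝ) (b d e : ℝ)
    (hb : b ≠ 0) (hd : d ≠ 0)
    (h0 : d * a 0 = e * c 0) (hck : c k = 0)
    (hi : ∀ i, 1 ≤ i → i ≤ k → d * a i = b * c (i - 1) + e * c i)
    (α₁ α₂ : ℝ)
    (h1 : (∑ i ∈ Finset.range (k + 1), a i * α₁ ^ i * α₂ ^ (k - i))
            + b * α₁ + e * α₂ = 0)
    (h2 : (∑ i ∈ Finset.range (k + 1), c i * α₁ ^ i * α₂ ^ (k - i))
            + d * α₂ = 0) :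
    ((∑ i ∈ Finset.range k, c i * α₁ ^ i * α₂ ^ (k - 1 - i)) + d = 0)
      ∨ (b * α₁ + e * α₂ = 0 ∧ α₂ = 0) := by
  set U := ∑ i ∈ Finset.range k, c i * α₁ ^ i * α₂ ^ (k - 1 - i) with hUdef
  have key : d * (∑ i ∈ Finset.range (k + 1), a i * α₁ ^ i * α₂ ^ (k - i))
      = e * (∑ i ∈ Finset.range (k + 1), c i * α₁ ^ i * α₂ ^ (k - i))
        + b * α₁ * U := by
    have hL : ∀ x ∈ Finset.range k,
        d * (a (x + 1) * α₁ ^ (x + 1) * α₂ ^ (k - (x + 1)))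
        = e * (c (x + 1) * α₁ ^ (x + 1) * α₂ ^ (k - (x + 1)))
          + b * α₁ * (c x * α₁ ^ x * α₂ ^ (k - 1 - x)) := by
      intro x hx
      have hxk : x + 1 ≤ k := Finset.mem_range.mp hx
      have h := hi (x + 1) (Nat.le_add_left 1 x) hxk
      simp only [Nat.add_sub_cancel] at h
      have hpow : α₂ ^ (k - (x + 1)) = α₂ ^ (k - 1 - x) := by congr 1; omega
      rw [hpow, pow_succ]
      linear_combination (α₁ ^ x * α₁ * α₂ ^ (k - 1 - x)) * h
    rw [Finset.sum_range_succ' (fun i => a i * α₁ ^ i * α₂ ^ (k - i)) k,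
        Finset.sum_range_succ' (fun i => c i * α₁ ^ i * α₂ ^ (k - i)) k,
        mul_add, mul_add, Finset.mul_sum, Finset.mul_sum,
        Finset.sum_congr rfl hL, Finset.sum_add_distrib, Finset.mul_sum]
    simp only [pow_zero, Nat.sub_zero, mul_one]
    have h0' : d * (a 0 * α₂ ^ k) = e * (c 0 * α₂ ^ k) := by
      linear_combination α₂ ^ k * h0
    ring_nf
    ring_nf at h0'
    have hs : ∑ x ∈ Finset.range k, e * c (1 + x) * α₁ * α₁ ^ x * α₂ ^ (k - (1 + x)) = ∑ x ∈ Finset.range k, e * α₁ * α₁ ^ x * α₂ ^ (k - (1 + x)) * c (1 + x) := Finset.sum_congr rfl (fun x _ => by ring)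
    linarith [h0', hs]
  have hmain : b * α₁ * (U + d) = 0 := by
    linear_combination d * h1 - key - e * h2
  rcases mul_eq_zero.mp hmain with h | h
  · -- b * α₁ = 0, so α₁ = 0
    have hα₁ : α₁ = 0 := by
      rcases mul_eq_zero.mp h with h' | h'
      · exact absurd h' hb
      · exact h'
    subst hα₁
    have hsum2 : (∑ i ∈ Finset.range (k + 1), c i * (0:ℝ) ^ i * α₂ ^ (k - i))
        = c 0 * α₂ ^ k := by
      rw [Finset.sum_range_succ' (fun i => c i * (0:ℝ) ^ i * α₂ ^ (k - i)) k]
      simp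
    rw [hsum2] at h2
    have hU0 : U = c 0 * α₂ ^ (k - 1) := by
      rw [hUdef, Finset.sum_eq_single_of_mem 0 (Finset.mem_range.mpr (by omega))]
      · simp
      · intro i _ hi0
        simp [zero_pow hi0]
    by_cases hα₂ : α₂ = 0
    · exact Or.inr ⟨by simp [hα₂], hα₂⟩
    · left
      have hkk : α₂ ^ k = α₂ ^ (k - 1) * α₂ := by
        rw [← pow_succ]; congr 1; omega
      rw [hkk] at h2
      rw [hU0]
      have : (c 0 * α₂ ^ (k - 1) + d) * α₂ = 0 := by linarith [h2]; 
      rcases mul_eq_zero.mp this with h' | h'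
      · exact h'
      · exact absurd h' hα₂
  · exact Or.inl h
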